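/- The inverse Mills ratio 𝒱(x) = φ(x)/Φ(x) is strictly decreasing on ℝ and satisfies 𝒱(x) > 0 and 𝒱(x) > −x for all x. -/

import Mathlib

open MeasureTheory

/-- Standard normal density. -/
noncomputable def stdNormalPDF (x : ℝ) : ℝ :=
  (Real.sqrt (2 * Real.pi))⁻¹ * Real.exp (-x ^ 2 / 2)

/-- Standard normal CDF. -/
noncomputable def stdNormalCDF (x : ℝ) : ℝ := ∫ u in Set.Iic x, stdNormalPDF u

lemma stdNormalPDF_pos (x : ℝ) : 0 < stdNormalPDF x := by
  have h : 0 < Real.sqrt (2 * Real.pi) :=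
    Real.sqrt_pos.2 (by positivity)
  exact mul_pos (inv_pos.2 h) (Real.exp_pos _)

lemma stdNormalPDF_continuous : Continuous stdNormalPDF := by
  unfold stdNormalPDF
  fun_prop

lemma stdNormalPDF_integrable : Integrable stdNormalPDF := by
  have h : Integrable (fun x : ℝ => Real.exp (-(1/2 : ℝ) * x ^ 2)) :=
    integrable_exp_neg_mul_sq (by norm_num)
  have : stdNormalPDF = fun x => (Real.sqrt (2 * Real.pi))⁻¹ *
      Real.exp (-(1/2 : ℝ) * x ^ 2) := by
    funext x; unfold stdNormalPDF; ring_nf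
  rw [this]
  exact h.const_mul _

lemma mul_stdNormalPDF_integrable : Integrable (fun x : ℝ => x * stdNormalPDF x) := by
  have h : Integrable (fun x : ℝ => x * Real.exp (-(1/2 : ℝ) * x ^ 2)) :=
    integrable_mul_exp_neg_mul_sq (by norm_num)
  have : (fun x : ℝ => x * stdNormalPDF x) = fun x =>
      (Real.sqrt (2 * Real.pi))⁻¹ * (x * Real.exp (-(1/2 : ℝ) * x ^ 2)) := by
    funext x; unfold stdNormalPDF; ring_nf
  rw [this]
  exact h.const_mul _

lemma stdNormalPDF_hasDerivAt (x : ℝ) :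
    HasDerivAt stdNormalPDF (-x * stdNormalPDF x) x := by
  have h1 : HasDerivAt (fun y : ℝ => -y ^ 2 / 2) (-x) x := by
    have := ((hasDerivAt_pow 2 x).neg.div_const 2)
    simpa using this.congr_deriv (by ring)
  have h2 : HasDerivAt (fun y : ℝ => Real.exp (-y ^ 2 / 2))
      (Real.exp (-x ^ 2 / 2) * (-x)) x := h1.exp
  have := h2.const_mul ((Real.sqrt (2 * Real.pi))⁻¹)
  unfold stdNormalPDF
  exact this.congr_deriv (by ring)

lemma stdNormalPDF_tendsto_atBot :
    Filter.Tendsto stdNormalPDF Filter.atBot (nhds 0) := by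
  have hneg : Filter.Tendsto (fun x : ℝ => -x) Filter.atBot Filter.atTop :=
    Filter.tendsto_neg_atBot_atTop
  have hsq : Filter.Tendsto (fun x : ℝ => x ^ 2) Filter.atBot Filter.atTop :=
    (hneg.atTop_mul_atTop₀ hneg).congr (fun x => by ring)
  have h1 : Filter.Tendsto (fun x : ℝ => -x ^ 2 / 2) Filter.atBot Filter.atBot := by
    have h := hsq.atTop_div_const (by norm_num : (0:ℝ) < 2)
    exact (Filter.tendsto_neg_atTop_atBot.comp h).congr (fun x => by simp [Function.comp]; ring)
  have h2 : Filter.Tendsto (fun x : ℝ => Real.exp (-x ^ 2 / 2)) Filter.atBot (nhds 0) :=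
    Real.tendsto_exp_atBot.comp h1
  have h3 := h2.const_mul ((Real.sqrt (2 * Real.pi))⁻¹)
  rw [mul_zero] at h3
  exact h3

lemma stdNormalCDF_pos (x : ℝ) : 0 < stdNormalCDF x := by
  unfold stdNormalCDF
  rw [setIntegral_pos_iff_support_of_nonneg_ae]
  · have hsupp : Function.support stdNormalPDF = Set.univ := by
      ext y; simp [Function.mem_support, (stdNormalPDF_pos y).ne']
    rw [hsupp, Set.univ_inter]
    simp [Real.volume_Iic]
  · exact Filter.Eventually.of_forall fun y => (stdNormalPDF_pos y).le
  · exact stdNormalPDF_integrable.integrableOn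

lemma stdNormalCDF_hasDerivAt (x : ℝ) :
    HasDerivAt stdNormalCDF (stdNormalPDF x) x := by
  have key : ∀ y : ℝ, stdNormalCDF y - stdNormalCDF 0 = ∫ u in (0:ℝ)..y, stdNormalPDF u :=
    fun y => intervalIntegral.integral_Iic_sub_Iic stdNormalPDF_integrable.integrableOn
      stdNormalPDF_integrable.integrableOn
  have hd : HasDerivAt (fun y => ∫ u in (0:ℝ)..y, stdNormalPDF u) (stdNormalPDF x) x :=
    intervalIntegral.integral_hasDerivAt_right
      stdNormalPDF_integrable.intervalIntegrable
      (stdNormalPDF_continuous.stronglyMeasurableAtFilter _ _)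
      stdNormalPDF_continuous.continuousAt
  have := hd.const_add (stdNormalCDF 0)
  exact this.congr_of_eventuallyEq
    (Filter.Eventually.of_forall fun y => by simp only; linarith [key y])

lemma integral_id_mul_stdNormalPDF (x : ℝ) :
    ∫ u in Set.Iic x, u * stdNormalPDF u = -stdNormalPDF x := by
  have := integral_Iic_of_hasDerivAt_of_tendsto' (a := x)
    (f := fun y => -stdNormalPDF y) (f' := fun u => u * stdNormalPDF u)
    (m := 0)
    (fun y _ => by exact (stdNormalPDF_hasDerivAt y).neg.congr_deriv (by ring))
    mul_stdNormalPDF_integrable.integrableOn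
    (by simpa using stdNormalPDF_tendsto_atBot.neg)
  simpa using this

lemma stdNormal_key_pos (x : ℝ) : 0 < stdNormalPDF x + x * stdNormalCDF x := by
  have hInt : IntegrableOn (fun u => (x - u) * stdNormalPDF u) (Set.Iic x) := by
    have : (fun u : ℝ => (x - u) * stdNormalPDF u) =
        fun u => x * stdNormalPDF u - u * stdNormalPDF u := by funext u; ring
    rw [this]
    exact ((stdNormalPDF_integrable.const_mul x).sub mul_stdNormalPDF_integrable).integrableOn
  have heq : ∫ u in Set.Iic x, (x - u) * stdNormalPDF u
      = stdNormalPDF x + x * stdNormalCDF x := by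
    have h1 : ∫ u in Set.Iic x, (x - u) * stdNormalPDF u
        = (∫ u in Set.Iic x, x * stdNormalPDF u) - ∫ u in Set.Iic x, u * stdNormalPDF u := by
      rw [← integral_sub (stdNormalPDF_integrable.const_mul x).integrableOn
        mul_stdNormalPDF_integrable.integrableOn]
      congr 1; funext u; ring
    rw [h1, integral_id_mul_stdNormalPDF, integral_const_mul]
    unfold stdNormalCDF; ring
  rw [← heq]
  rw [setIntegral_pos_iff_support_of_nonneg_ae]
  · have hsub : Set.Iio x ⊆ Function.support (fun u => (x - u) * stdNormalPDF u) ∩ Set.Iic x := by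
      intro u hu
      refine ⟨?_, Set.mem_Iic.2 (le_of_lt (Set.mem_Iio.1 hu))⟩
      simp only [Function.mem_support]
      exact ne_of_gt (mul_pos (sub_pos.2 (Set.mem_Iio.1 hu)) (stdNormalPDF_pos u))
    calc (0:ENNReal) < volume (Set.Iio x) := by simp [Real.volume_Iio]
      _ ≤ _ := measure_mono hsub
  · filter_upwards [ae_restrict_mem measurableSet_Iic] with u hu
    exact mul_nonneg (sub_nonneg.2 hu) (stdNormalPDF_pos u).le
  · exact hInt

/-- Inverse Mills ratio `𝒱(x) = φ(x)/Φ(x)`. -/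
noncomputable def millsV (x : ℝ) : ℝ := stdNormalPDF x / stdNormalCDF x

lemma millsV_pos (x : ℝ) : 0 < millsV x :=
  div_pos (stdNormalPDF_pos x) (stdNormalCDF_pos x)

lemma millsV_gt_neg (x : ℝ) : -x < millsV x := by
  have h := stdNormal_key_pos x
  have hc := stdNormalCDF_pos x
  rw [millsV, lt_div_iff₀ hc]
  nlinarith

lemma millsV_hasDerivAt (x : ℝ) :
    HasDerivAt millsV (-(millsV x * (millsV x + x))) x := by
  have hc := (stdNormalCDF_pos x).ne'
  have h := (stdNormalPDF_hasDerivAt x).div (stdNormalCDF_hasDerivAt x) hc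
  refine h.congr_deriv ?_
  simp only [millsV]
  field_simp
  ring

/-- The inverse Mills ratio is strictly decreasing, positive, and satisfies
`𝒱(x) > −x` for all `x`. -/
theorem millsV_strictAnti_pos_gt_neg :
    StrictAnti millsV ∧ (∀ x : ℝ, 0 < millsV x) ∧ (∀ x : ℝ, -x < millsV x) := by
  refine ⟨?_, millsV_pos, millsV_gt_neg⟩
  refine strictAnti_of_hasDerivAt_neg (f' := fun x => -(millsV x * (millsV x + x)))
    millsV_hasDerivAt ?_
  intro x
  have h1 := millsV_pos x
  have h2 := millsV_gt_neg x
  have : 0 < millsV x * (millsV x + x) := mul_pos h1 (by linarith)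
  linarith
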